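/- For any natural number m, any natural number M with 2^m ≤ M < 2^{m+1}, and any real coefficients a_{2^m}, ..., a_{2^{m+1}-1}, the L^1 norm of the partial sum satisfies ∫_0^1 |∑_{k=2^m}^{M} a_k W_k(x)| dx ≤ (∫_0^1 |∑_{k=2^m}^{2^{m+1}-1} a_k W_k(x)|^2 dx)^{1/2}. -/

import Mathlib

open MeasureTheory Finset Filter

noncomputable def rademacher (n : ℕ) (x : ℝ) : ℝ :=
  if 1 ≤ x then -1 else (-1 : ℝ) ^ ⌊(2 : ℝ) ^ n * x⌋

noncomputable def walsh (n : ℕ) (x : ℝ) : ℝ :=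
  ∏ i ∈ Finset.range (n + 1), if n.testBit i then rademacher (i + 1) x else 1

lemma rademacher_mul_self (n : ℕ) (x : ℝ) : rademacher n x * rademacher n x = 1 := by
  unfold rademacher
  split
  · norm_num
  · rw [← mul_zpow]; norm_num

lemma measurable_rademacher (n : ℕ) : Measurable (rademacher n) := by
  unfold rademacher
  apply Measurable.ite (measurableSet_le measurable_const measurable_id)
  · exact measurable_const
  · exact Measurable.comp (measurable_from_top) (Int.measurable_floor.comp (measurable_const_mul _))

lemma walsh_eq_prod {n N : ℕ} (h : n < 2 ^ N) (x : ℝ) :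
    walsh n x = ∏ i ∈ Finset.range N, if n.testBit i then rademacher (i + 1) x else 1 := by
  unfold walsh
  rcases le_total (n + 1) N with hN | hN
  · exact Finset.prod_subset (Finset.range_subset_range.2 hN) (fun i _ hi => by
      simp at hi
      rw [Nat.testBit_lt_two_pow (lt_of_lt_of_le (Nat.lt_two_pow_self) (Nat.pow_le_pow_right (by norm_num) (Nat.le_of_succ_le hi)))]
      simp)
  · exact (Finset.prod_subset (Finset.range_subset_range.2 hN) (fun i _ hi => by
      simp at hi
      rw [Nat.testBit_lt_two_pow (lt_of_lt_of_le h (Nat.pow_le_pow_right (by norm_num) hi))]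
      simp)).symm

lemma walsh_mul (j k : ℕ) (x : ℝ) : walsh j x * walsh k x = walsh (j ^^^ k) x := by
  set N := j + k + 1 with hN
  have hj : j < 2 ^ N := lt_of_le_of_lt (Nat.le_add_right j k) ((Nat.lt_two_pow_self).trans_le (Nat.pow_le_pow_right (by norm_num) (Nat.le_succ _)))
  have hk : k < 2 ^ N := lt_of_le_of_lt (Nat.le_add_left k j) ((Nat.lt_two_pow_self).trans_le (Nat.pow_le_pow_right (by norm_num) (Nat.le_succ _)))
  have hx : j ^^^ k < 2 ^ N := Nat.xor_lt_two_pow hj hk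
  rw [walsh_eq_prod hj, walsh_eq_prod hk, walsh_eq_prod hx, ← Finset.prod_mul_distrib]
  apply Finset.prod_congr rfl
  intro i _
  rw [Nat.testBit_xor]
  cases hb1 : j.testBit i <;> cases hb2 : k.testBit i <;> simp [rademacher_mul_self]

lemma walsh_zero (x : ℝ) : walsh 0 x = 1 := by simp [walsh]

lemma walsh_mul_self (n : ℕ) (x : ℝ) : walsh n x * walsh n x = 1 := by
  rw [walsh_mul, Nat.xor_self, walsh_zero]

lemma abs_walsh (n : ℕ) (x : ℝ) : |walsh n x| = 1 := by
  have := walsh_mul_self n x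
  rcases abs_choice (walsh n x) with h | h <;> nlinarith [abs_nonneg (walsh n x)]

lemma measurable_walsh (n : ℕ) : Measurable (walsh n) := by
  unfold walsh
  apply Finset.measurable_prod
  intro i _
  split
  · exact measurable_rademacher _
  · exact measurable_const

lemma floor_eval {N i j : ℕ} (hiN : i < N) {x : ℝ}
    (hx1 : (j:ℝ)/2^N ≤ x) (hx2 : x < ((j:ℝ)+1)/2^N) :
    ⌊(2:ℝ)^(i+1) * x⌋ = (j / 2^(N-(i+1)) : ℕ) := by
  set d := N - (i+1) with hd
  set q := j / 2^d with hq
  have hpow : (2:ℝ)^(i+1) * (2:ℝ)^d = 2^N := by rw [← pow_add]; congr 1; omega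
  have hd2 : (0:ℝ) < 2^d := by positivity
  have hN2 : (0:ℝ) < 2^N := by positivity
  have hql : q * 2^d ≤ j := Nat.div_mul_le_self j _
  have hqu : j + 1 ≤ (q + 1) * 2^d := by
    have ha := Nat.div_add_mod j (2^d)
    rw [← hq] at ha
    have hb : j % 2^d < 2^d := Nat.mod_lt _ (Nat.two_pow_pos _)
    have hc : j + 1 ≤ 2^d * q + 2^d := by omega
    calc j + 1 ≤ 2^d * q + 2^d := hc
      _ = (q+1) * 2^d := by ring
  have h1 : ((q:ℝ)) * 2^d ≤ j := by exact_mod_cast hql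
  have h1' : ((j:ℝ)) + 1 ≤ ((q:ℝ)+1) * 2^d := by exact_mod_cast hqu
  have h2 : (j:ℝ) ≤ x * 2^N := (div_le_iff₀ hN2).1 hx1
  have h3 : x * 2^N < (j:ℝ)+1 := (lt_div_iff₀ hN2).1 hx2
  rw [Int.floor_eq_iff]
  constructor
  · push_cast
    have : (q:ℝ) * 2^d ≤ (2^(i+1) * x) * 2^d := by
      calc (q:ℝ) * 2^d ≤ j := h1
        _ ≤ x * 2^N := h2
        _ = 2^(i+1) * x * 2^d := by rw [← hpow]; ring
    exact le_of_mul_le_mul_right this hd2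
  · push_cast
    have : (2^(i+1) * x) * 2^d < ((q:ℝ)+1) * 2^d := by
      calc (2:ℝ)^(i+1) * x * 2^d = x * 2^N := by rw [← hpow]; ring
        _ < (j:ℝ)+1 := h3
        _ ≤ ((q:ℝ)+1) * 2^d := h1'
    exact lt_of_mul_lt_mul_right this (le_of_lt hd2)

lemma walsh_eval {n N j : ℕ} (hn : n < 2^N) {x : ℝ}
    (hx1 : (j:ℝ)/2^N ≤ x) (hx2 : x < ((j:ℝ)+1)/2^N) (hj : j + 1 ≤ 2^N) :
    walsh n x = ∏ i ∈ Finset.range N, if n.testBit i then ((-1:ℝ))^(j / 2^(N-(i+1))) else 1 := by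
  rw [walsh_eq_prod hn]
  apply Finset.prod_congr rfl
  intro i hi
  simp only [Finset.mem_range] at hi
  by_cases hb : n.testBit i
  · rw [if_pos hb, if_pos hb]
    have hxlt1 : x < 1 := by
      apply lt_of_lt_of_le hx2
      rw [div_le_one (by positivity)]
      exact_mod_cast hj
    unfold rademacher
    rw [if_neg (not_le.2 hxlt1), floor_eval hi hx1 hx2, zpow_natCast]
  · rw [if_neg hb, if_neg hb]

lemma intervalIntegrable_walsh (n : ℕ) (a b : ℝ) : IntervalIntegrable (walsh n) volume a b := by
  apply IntervalIntegrable.mono_fun (intervalIntegrable_const (c := (1:ℝ)))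
    ((measurable_walsh n).aestronglyMeasurable)
  refine Filter.Eventually.of_forall (fun x => ?_)
  simp [Real.norm_eq_abs, abs_walsh]

lemma sum_range_two_mul (K : ℕ) (f : ℕ → ℝ) :
    ∑ j ∈ Finset.range (2*K), f j = ∑ t ∈ Finset.range K, (f (2*t) + f (2*t+1)) := by
  induction K with
  | zero => simp
  | succ k ih =>
      have : 2 * (k+1) = (2*k + 1) + 1 := by ring
      rw [this, Finset.sum_range_succ, Finset.sum_range_succ, ih, Finset.sum_range_succ]
      rw [add_assoc]

lemma div_pow_succ_eq (t d : ℕ) (hd : 1 ≤ d) : (2*t+1) / 2^d = (2*t) / 2^d := by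
  obtain ⟨e, rfl⟩ : ∃ e, d = e + 1 := ⟨d - 1, by omega⟩
  have h1 : (2:ℕ)^(e+1) = 2 * 2^e := by ring
  rw [h1, ← Nat.div_div_eq_div_mul, ← Nat.div_div_eq_div_mul]
  congr 1
  omega

lemma integral_walsh {n : ℕ} (hn : n ≠ 0) : ∫ x in (0:ℝ)..1, walsh n x = 0 := by
  set L := Nat.log 2 n with hL
  set N := L + 1 with hNdef
  have hn2 : n < 2^N := Nat.lt_pow_succ_log_self (by norm_num) n
  have htop : n.testBit L = true := by
    rw [Nat.testBit_eq_decide_div_mod_eq]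
    have h1 : 2^L ≤ n := Nat.pow_log_le_self 2 hn
    have hdiv : n / 2^L = 1 := by
      apply Nat.div_eq_of_lt_le
      · simpa using h1
      · have : n < 2^(L+1) := hn2
        calc n < 2^(L+1) := this
          _ = (1+1) * 2^L := by ring
    simp [hdiv]
  set c : ℕ → ℝ := fun j => ∏ i ∈ Finset.range N, if n.testBit i then ((-1:ℝ))^(j / 2^(N-(i+1))) else 1 with hc
  -- per-piece evaluation
  have key : ∀ j : ℕ, j + 1 ≤ 2^N →
      (∫ x in ((j:ℝ)/2^N)..(((j:ℕ)+1:ℝ)/2^N), walsh n x) = c j * (1/2^N) := by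
    intro j hj
    have h2N : (0:ℝ) < 2^N := by positivity
    have hab : ((j:ℝ)/2^N) ≤ ((j:ℝ)+1)/2^N := by
      apply div_le_div_of_nonneg_right ?_ h2N.le
      linarith
    have hconst : Set.EqOn (walsh n) (fun _ => c j) (Set.Ioo ((j:ℝ)/2^N) (((j:ℝ)+1)/2^N)) := by
      intro x hx
      exact walsh_eval hn2 (le_of_lt hx.1) hx.2 hj
    rw [intervalIntegral.integral_of_le hab, MeasureTheory.integral_Ioc_eq_integral_Ioo,
      MeasureTheory.setIntegral_congr_fun measurableSet_Ioo hconst,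
      MeasureTheory.setIntegral_const, Real.volume_real_Ioo, smul_eq_mul]
    rw [max_eq_left (by linarith)]
    rw [show ((j:ℝ)+1)/2^N - (j:ℝ)/2^N = 1/2^N by ring]
    ring
  have h01 : (∫ x in (0:ℝ)..1, walsh n x) =
      ∫ x in (((0:ℕ):ℝ)/2^N)..(((2^N:ℕ):ℝ)/2^N), walsh n x := by
    norm_num
  have hadj := intervalIntegral.sum_integral_adjacent_intervals
    (a := fun k : ℕ => (k:ℝ)/2^N) (μ := volume) (n := 2^N)
    (fun k _ => intervalIntegrable_walsh n _ _)
  rw [h01, ← hadj]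
  have hterm : ∀ j ∈ Finset.range (2^N),
      (∫ x in ((j:ℝ)/2^N)..(((j+1:ℕ):ℝ)/2^N), walsh n x) = c j * (1/2^N) := by
    intro j hj
    simp only [Finset.mem_range] at hj
    have := key j (by omega)
    push_cast at this ⊢
    exact this
  rw [Finset.sum_congr rfl hterm, ← Finset.sum_mul]
  have hcsum : ∑ j ∈ Finset.range (2^N), c j = 0 := by
    have hNsplit : 2^N = 2 * 2^L := by rw [hNdef, pow_succ]; ring
    rw [hNsplit, sum_range_two_mul]
    apply Finset.sum_eq_zero
    intro t _
    have hcs : ∀ j : ℕ, c j =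
        (∏ i ∈ Finset.range L, if n.testBit i then ((-1:ℝ))^(j / 2^(N-(i+1))) else 1) * ((-1:ℝ))^j := by
      intro j
      simp only [hc]
      rw [hNdef, Finset.prod_range_succ, if_pos htop]
      congr 1
      rw [show L+1-(L+1) = 0 from by omega]
      norm_num
    rw [hcs, hcs]
    have hP : (∏ i ∈ Finset.range L, if n.testBit i then ((-1:ℝ))^((2*t+1) / 2^(N-(i+1))) else 1)
        = ∏ i ∈ Finset.range L, if n.testBit i then ((-1:ℝ))^((2*t) / 2^(N-(i+1))) else 1 := by
      apply Finset.prod_congr rfl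
      intro i hi
      simp only [Finset.mem_range] at hi
      rw [div_pow_succ_eq t _ (by omega)]
    rw [hP]
    have hpow1 : ((-1:ℝ))^(2*t+1) = -((-1:ℝ))^(2*t) := by rw [pow_succ]; ring
    rw [hpow1]
    ring
  rw [hcsum, zero_mul]

lemma integral_walsh_xor (j k : ℕ) :
    (∫ x in (0:ℝ)..1, walsh (j ^^^ k) x) = if j = k then 1 else 0 := by
  by_cases h : j = k
  · subst h
    rw [Nat.xor_self, if_pos rfl]
    simp [walsh_zero]
  · rw [if_neg h]
    exact integral_walsh (fun h0 => h (by have := congrArg (· ^^^ k) h0; simpa [Nat.xor_assoc, Nat.xor_self] using this))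

lemma intervalIntegrable_sum_walsh (s : Finset ℕ) (b : ℕ → ℝ) (g : ℕ → ℕ) (a1 a2 : ℝ) :
    IntervalIntegrable (fun x => ∑ k ∈ s, b k * walsh (g k) x) volume a1 a2 := by
  have h : (fun x => ∑ k ∈ s, b k * walsh (g k) x) = ∑ k ∈ s, (fun x => b k * walsh (g k) x) := by
    funext x; simp
  rw [h]
  exact IntervalIntegrable.sum s (fun k _ => (intervalIntegrable_walsh _ _ _).const_mul _)

lemma parseval (s : Finset ℕ) (a : ℕ → ℝ) :
    (∫ x in (0:ℝ)..1, (∑ k ∈ s, a k * walsh k x)^2) = ∑ k ∈ s, (a k)^2 := by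
  have expand : ∀ x : ℝ, (∑ k ∈ s, a k * walsh k x)^2
      = ∑ j ∈ s, ∑ k ∈ s, (a j * a k) * walsh (j ^^^ k) x := by
    intro x
    rw [sq, Finset.sum_mul_sum]
    refine Finset.sum_congr rfl fun j _ => Finset.sum_congr rfl fun k _ => ?_
    rw [← walsh_mul]; ring
  simp_rw [expand]
  have h1 : (∫ x in (0:ℝ)..1, ∑ j ∈ s, ∑ k ∈ s, a j * a k * walsh (j ^^^ k) x)
      = ∑ j ∈ s, ∫ x in (0:ℝ)..1, ∑ k ∈ s, a j * a k * walsh (j ^^^ k) x :=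
    intervalIntegral.integral_finset_sum (f := fun j x => ∑ k ∈ s, a j * a k * walsh (j ^^^ k) x)
      (fun j _ => intervalIntegrable_sum_walsh s (fun k => a j * a k) (fun k => j ^^^ k) 0 1)
  rw [h1]
  have hinner : ∀ j ∈ s, (∫ x in (0:ℝ)..1, ∑ k ∈ s, (a j * a k) * walsh (j ^^^ k) x)
      = ∑ k ∈ s, (a j * a k) * (if j = k then (1:ℝ) else 0) := by
    intro j _
    have h2 : (∫ x in (0:ℝ)..1, ∑ k ∈ s, a j * a k * walsh (j ^^^ k) x)
        = ∑ k ∈ s, ∫ x in (0:ℝ)..1, a j * a k * walsh (j ^^^ k) x :=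
      intervalIntegral.integral_finset_sum (f := fun k x => a j * a k * walsh (j ^^^ k) x)
        (fun k _ => (intervalIntegrable_walsh _ _ _).const_mul _)
    rw [h2]
    refine Finset.sum_congr rfl fun k _ => ?_
    rw [intervalIntegral.integral_const_mul, integral_walsh_xor]
  rw [Finset.sum_congr rfl hinner]
  refine Finset.sum_congr rfl fun j hj => ?_
  have h2 : ∀ k ∈ s, (a j * a k) * (if j = k then (1:ℝ) else 0)
      = if k = j then a j ^ 2 else 0 := by
    intro k _
    by_cases h : j = k
    · subst h; simp [sq]
    · rw [if_neg h, if_neg (fun hk : k = j => h hk.symm)]; ring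
  rw [Finset.sum_congr rfl h2, Finset.sum_ite_eq' s j (fun _ => a j ^ 2), if_pos hj]

lemma intervalIntegrable_of_bound (g : ℝ → ℝ) (hg : Measurable g) (C : ℝ)
    (hC : ∀ x, |g x| ≤ C) (a b : ℝ) : IntervalIntegrable g volume a b := by
  apply IntervalIntegrable.mono_fun (intervalIntegrable_const (c := C)) hg.aestronglyMeasurable
  refine Filter.Eventually.of_forall (fun x => ?_)
  simp only [Real.norm_eq_abs]
  exact (hC x).trans (le_abs_self C)

theorem walsh_partial_block_L1_le_L2 (m M : ℕ) (h1 : 2 ^ m ≤ M) (h2 : M < 2 ^ (m + 1))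
    (a : ℕ → ℝ) :
    (∫ x in (0 : ℝ)..1, |∑ k ∈ Finset.Icc (2 ^ m) M, a k * walsh k x|) ≤
      (∫ x in (0 : ℝ)..1,
        (∑ k ∈ Finset.Ico (2 ^ m) (2 ^ (m + 1)), a k * walsh k x) ^ 2) ^ ((1 : ℝ) / 2) := by
  set f : ℝ → ℝ := fun x => ∑ k ∈ Finset.Icc (2 ^ m) M, a k * walsh k x with hf
  set Sp : ℝ := ∑ k ∈ Finset.Icc (2 ^ m) M, a k ^ 2 with hSp
  set S : ℝ := ∑ k ∈ Finset.Ico (2 ^ m) (2 ^ (m + 1)), a k ^ 2 with hS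
  have hP1 : (∫ x in (0:ℝ)..1, f x ^ 2) = Sp := parseval _ a
  have hP2 : (∫ x in (0:ℝ)..1,
      (∑ k ∈ Finset.Ico (2 ^ m) (2 ^ (m + 1)), a k * walsh k x) ^ 2) = S := parseval _ a
  have hSp0 : 0 ≤ Sp := Finset.sum_nonneg (fun k _ => sq_nonneg _)
  have hsub : Sp ≤ S := by
    apply Finset.sum_le_sum_of_subset_of_nonneg
    · intro k hk
      simp only [Finset.mem_Icc] at hk
      simp only [Finset.mem_Ico]
      omega
    · intro k _ _; exact sq_nonneg _
  have hS0 : 0 ≤ S := le_trans hSp0 hsub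
  -- measurability/bounds of f
  have hfm : Measurable f := by
    apply Finset.measurable_sum
    intro k _
    exact (measurable_walsh k).const_mul _
  set C : ℝ := ∑ k ∈ Finset.Icc (2 ^ m) M, |a k| with hC
  have hfb : ∀ x, |f x| ≤ C := by
    intro x
    calc |f x| ≤ ∑ k ∈ Finset.Icc (2 ^ m) M, |a k * walsh k x| := Finset.abs_sum_le_sum_abs _ _
      _ = C := by
        apply Finset.sum_congr rfl
        intro k _
        rw [abs_mul, abs_walsh, mul_one]
  have habs : IntervalIntegrable (fun x => |f x|) volume 0 1 :=
    intervalIntegrable_of_bound _ hfm.abs C (fun x => by simpa using hfb x) 0 1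
  have hsq : IntervalIntegrable (fun x => f x ^ 2) volume 0 1 := by
    apply intervalIntegrable_of_bound _ (hfm.pow_const 2) (C^2)
    intro x
    rw [abs_pow]
    exact pow_le_pow_left₀ (abs_nonneg _) (hfb x) 2
  have key2 : ∀ t : ℝ, 0 < t → (∫ x in (0:ℝ)..1, |f x|) ≤ (t + Sp/t)/2 := by
    intro t ht
    have hpt : ∀ x ∈ Set.Icc (0:ℝ) 1, |f x| ≤ t/2 + (2*t)⁻¹ * f x ^ 2 := by
      intro x _
      have h1 : (0:ℝ) < 2*t := by linarith
      have h2 : t/2 + (2*t)⁻¹ * f x ^ 2 - |f x| = (2*t)⁻¹ * (|f x| - t)^2 := by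
        field_simp
        rw [sub_sq, sq_abs]
        ring
      have h3 : 0 ≤ (2*t)⁻¹ * (|f x| - t)^2 := by positivity
      linarith
    have hri : IntervalIntegrable (fun x => t/2 + (2*t)⁻¹ * f x ^ 2) volume 0 1 :=
      (intervalIntegrable_const).add (hsq.const_mul _)
    have hmono := intervalIntegral.integral_mono_on (by norm_num : (0:ℝ) ≤ 1) habs hri hpt
    rw [intervalIntegral.integral_add intervalIntegrable_const (hsq.const_mul _),
      intervalIntegral.integral_const_mul, hP1, intervalIntegral.integral_const] at hmono
    calc (∫ x in (0:ℝ)..1, |f x|) ≤ ((1:ℝ)-0) • (t/2) + (2*t)⁻¹ * Sp := hmono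
      _ = (t + Sp/t)/2 := by
          rw [smul_eq_mul]
          field_simp
          ring
  have hfeq : (∫ x in (0 : ℝ)..1, |∑ k ∈ Finset.Icc (2 ^ m) M, a k * walsh k x|)
      = ∫ x in (0:ℝ)..1, |f x| := rfl
  rw [hfeq, hP2, ← Real.sqrt_eq_rpow]
  rcases eq_or_lt_of_le hS0 with hz | hpos
  · have hSpz : Sp = 0 := le_antisymm (hz ▸ hsub) hSp0
    rw [← hz, Real.sqrt_zero]
    by_contra hcon
    push_neg at hcon
    have hk := key2 _ hcon
    rw [hSpz, zero_div] at hk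
    linarith
  · have hst : 0 < Real.sqrt S := Real.sqrt_pos.2 hpos
    have hk := key2 _ hst
    calc (∫ x in (0:ℝ)..1, |f x|) ≤ (Real.sqrt S + Sp/Real.sqrt S)/2 := hk
      _ ≤ (Real.sqrt S + S/Real.sqrt S)/2 := by gcongr
      _ = Real.sqrt S := by rw [Real.div_sqrt]; ring
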